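/- Let (J_1, J_2, …) be a feasible sequence of languages with respect to a language K, and let K' be any finite subset of K. Then the family of languages {J_t : t ≥ 1 and K' ⊆ J_t} contains infinitely many distinct languages, and the union of all languages in this family equals K. -/

import Mathlib

/-- The sequence of languages `(J 0, J 1, …)` (possibly with repetitions) is
feasible with respect to `K`: each `J t` is a proper subset of `K`, and there is an
enumeration `w_0, w_1, …` of `K` such that `{w_0, …, w_t} ⊆ J t` for every `t`. -/
def Feasible (J : ℕ → Set ℕ) (K : Set ℕ) : Prop :=
  (∀ t, J t ⊂ K) ∧
  ∃ E : ℕ → ℕ, Function.Injective E ∧ Set.range E = K ∧ ∀ t, ∀ s ≤ t, E s ∈ J t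

/-- For a feasible sequence with respect to `K` and any finite `K' ⊆ K`, the family
of languages in the sequence that contain `K'` contains infinitely many distinct
languages, and its union equals `K`. -/
theorem stmt19 (J : ℕ → Set ℕ) (hJinf : ∀ t, (J t).Infinite)
    (K : Set ℕ) (hK : K.Infinite) (hfeas : Feasible J K)
    (K' : Set ℕ) (hK'fin : K'.Finite) (hK'sub : K' ⊆ K) :
    (J '' {t : ℕ | K' ⊆ J t}).Infinite ∧ (⋃ t ∈ {t : ℕ | K' ⊆ J t}, J t) = K := by
  obtain ⟨hproper, E, hinj, hrange, hmem⟩ := hfeas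
  have hpre : (E ⁻¹' K').Finite := hK'fin.preimage hinj.injOn
  obtain ⟨T, hT⟩ := hpre.bddAbove
  -- all large t contain K'
  have hsub : ∀ t, T ≤ t → K' ⊆ J t := by
    intro t ht x hx
    have hxK : x ∈ K := hK'sub hx
    rw [← hrange] at hxK
    obtain ⟨s, rfl⟩ := hxK
    have hsT : s ≤ T := hT hx
    exact hmem t s (hsT.trans ht)
  have hSinf : {t : ℕ | K' ⊆ J t}.Infinite :=
    (Set.Ici_infinite T).mono (fun t ht => hsub t ht)
  constructor
  · by_contra hfin
    rw [Set.not_infinite] at hfin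
    have hfib : ∃ A ∈ J '' {t : ℕ | K' ⊆ J t},
        {t : ℕ | t ∈ {t : ℕ | K' ⊆ J t} ∧ J t = A}.Infinite := by
      by_contra h
      push_neg at h
      have : {t : ℕ | K' ⊆ J t} ⊆
          ⋃ A ∈ J '' {t : ℕ | K' ⊆ J t},
            {t : ℕ | t ∈ {t : ℕ | K' ⊆ J t} ∧ J t = A} := by
        intro t ht
        exact Set.mem_biUnion (Set.mem_image_of_mem J ht) ⟨ht, rfl⟩
      exact hSinf (Set.Finite.subset (Set.Finite.biUnion hfin h) this)
    obtain ⟨A, hA, hFinf⟩ := hfib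
    obtain ⟨t₀, _, ht₀⟩ := hA
    have hKA : K ⊆ A := by
      intro x hx
      rw [← hrange] at hx
      obtain ⟨s, rfl⟩ := hx
      obtain ⟨t, ht, hst⟩ := hFinf.exists_gt s
      rw [← ht.2]
      exact hmem t s hst.le
    rw [← ht₀] at hKA
    exact (hproper t₀).2 hKA
  · apply subset_antisymm
    · intro x hx
      simp only [Set.mem_iUnion] at hx
      obtain ⟨t, _, hxt⟩ := hx
      exact (hproper t).1 hxt
    · intro x hx
      rw [← hrange] at hx
      obtain ⟨s, rfl⟩ := hx
      exact Set.mem_biUnion (hsub (max s T) (le_max_right s T))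
        (hmem (max s T) s (le_max_left s T))
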